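/- Let M be a finite direct sum, as an encoded right A_∞-module over A, of copies of the trivial one-dimensional module Z₂ (all operators zero) and of modules R_k with parameters k ≥ 2, and let N be a finite direct sum of copies of the trivial one-dimensional module and of modules L_k with parameters k ≥ 2. Then for every n ≥ 1, the cohomology of the truncated reduced bar complex (M ⊗_A N)_n has Z₂-dimension at least (dim_{Z₂} M)·(dim_{Z₂} N). If moreover every parameter k occurring among the summands of M and of N is at least 3, and n ≥ 2, then the dimension of the cohomology is at least 2·(dim_{Z₂} M)·(dim_{Z₂} N). -/

import Mathlib

/-- The underlying space of a direct sum of `r` copies of the trivial one-dimensional module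
`ℤ/2` and two-dimensional modules `R_{k_1}, …, R_{k_s}` (resp. `L_{k_1}, …, L_{k_s}`). -/
abbrev SumModel (r s : ℕ) : Type :=
  (Fin r → ZMod 2) × (Fin s → ZMod 2 × ZMod 2)

open TensorProduct LinearMap Module

section Aux
variable (r s : ℕ)

def prT : SumModel r s →ₗ[ZMod 2] (Fin r → ZMod 2) := LinearMap.fst _ _ _
def inT : (Fin r → ZMod 2) →ₗ[ZMod 2] SumModel r s := LinearMap.inl _ _ _
def prC : SumModel r s →ₗ[ZMod 2] (Fin s → ZMod 2) :=
  LinearMap.pi fun j => LinearMap.fst _ _ _ ∘ₗ LinearMap.proj j ∘ₗ LinearMap.snd _ _ _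
def inC : (Fin s → ZMod 2) →ₗ[ZMod 2] SumModel r s :=
  LinearMap.inr _ _ _ ∘ₗ LinearMap.pi fun j => LinearMap.inl _ _ _ ∘ₗ LinearMap.proj j
def prE : SumModel r s →ₗ[ZMod 2] (Fin s → ZMod 2) :=
  LinearMap.pi fun j => LinearMap.snd _ _ _ ∘ₗ LinearMap.proj j ∘ₗ LinearMap.snd _ _ _
def inE : (Fin s → ZMod 2) →ₗ[ZMod 2] SumModel r s :=
  LinearMap.inr _ _ _ ∘ₗ LinearMap.pi fun j => LinearMap.inr _ _ _ ∘ₗ LinearMap.proj j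

@[simp] lemma prT_apply (x : SumModel r s) : prT r s x = x.1 := rfl
@[simp] lemma inT_apply (u : Fin r → ZMod 2) : inT r s u = (u, 0) := rfl
@[simp] lemma prC_apply (x : SumModel r s) : prC r s x = fun j => (x.2 j).1 := rfl
@[simp] lemma inC_apply (u : Fin s → ZMod 2) : inC r s u = (0, fun j => (u j, 0)) := rfl
@[simp] lemma prE_apply (x : SumModel r s) : prE r s x = fun j => (x.2 j).2 := rfl
@[simp] lemma inE_apply (u : Fin s → ZMod 2) : inE r s u = (0, fun j => (0, u j)) := rfl

lemma Psum : inT r s ∘ₗ prT r s + inC r s ∘ₗ prC r s + inE r s ∘ₗ prE r s = LinearMap.id := by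
  apply LinearMap.ext; intro x
  refine Prod.ext ?_ (funext fun j => Prod.ext ?_ ?_) <;> simp

end Aux

section Ops
variable {r s : ℕ} (ks : Fin s → ℕ)
  (mOp : ℕ → SumModel r s →ₗ[ZMod 2] SumModel r s)
  (hmOp : ∀ i x, mOp i x =
      (0, fun j => if i + 1 = ks j then ((0 : ZMod 2), (x.2 j).1) else 0))

include hmOp

lemma mOp_inT (p : ℕ) : mOp p ∘ₗ inT r s = 0 := by
  apply LinearMap.ext; intro u
  simp only [comp_apply, inT_apply, hmOp, LinearMap.zero_apply]
  refine Prod.ext rfl (funext fun j => ?_)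
  simp

lemma mOp_inE (p : ℕ) : mOp p ∘ₗ inE r s = 0 := by
  apply LinearMap.ext; intro u
  simp only [comp_apply, inE_apply, hmOp, LinearMap.zero_apply]
  refine Prod.ext rfl (funext fun j => ?_)
  simp

lemma inE_prE_mOp (p : ℕ) : (inE r s ∘ₗ prE r s) ∘ₗ mOp p = mOp p := by
  apply LinearMap.ext; intro x
  simp only [comp_apply, hmOp, prE_apply, inE_apply]
  refine Prod.ext rfl (funext fun j => ?_)
  dsimp only
  split <;> simp

lemma mOp_mOp (a b : ℕ) : mOp a ∘ₗ mOp b = 0 := by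
  apply LinearMap.ext; intro x
  simp only [comp_apply, hmOp, LinearMap.zero_apply]
  refine Prod.ext rfl (funext fun j => ?_)
  dsimp only
  split
  · split <;> simp
  · rfl

lemma mOp_small (p : ℕ) (hp : ∀ j, p + 2 ≤ ks j) : mOp p = 0 := by
  apply LinearMap.ext; intro x
  simp only [hmOp, LinearMap.zero_apply]
  refine Prod.ext rfl (funext fun j => ?_)
  have := hp j
  dsimp only
  split <;> first | omega | rfl

end Ops

section Helpers

lemma sum_single_eval_eq {n m : ℕ} {T : Type*} [AddCommMonoid T]
    (e : Fin m → Fin n) (he : Function.Injective e) (g : Fin m → T) (j₀ : Fin m) :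
    (∑ j : Fin m, Pi.single (M := fun _ : Fin n => T) (e j) (g j)) (e j₀) = g j₀ := by
  rw [Finset.sum_apply]
  rw [Finset.sum_eq_single j₀]
  · simp
  · intro j _ hj
    exact Pi.single_eq_of_ne (M := fun _ : Fin n => T) (fun h => hj (he h.symm)) _
  · simp

lemma sum_single_eval_ne {n m : ℕ} {T : Type*} [AddCommMonoid T]
    (e : Fin m → Fin n) (g : Fin m → T) (i : Fin n) (hi : ∀ j, e j ≠ i) :
    (∑ j : Fin m, Pi.single (M := fun _ : Fin n => T) (e j) (g j)) i = 0 := by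
  rw [Finset.sum_apply]
  apply Finset.sum_eq_zero
  intro j _
  exact Pi.single_eq_of_ne (M := fun _ : Fin n => T) (fun h => hi j h.symm) _

end Helpers

abbrev TT (r s r' s' : ℕ) := TensorProduct (ZMod 2) (SumModel r s) (SumModel r' s')
abbrev CC (r s r' s' n : ℕ) := Fin n → TT r s r' s'

section RankBound

set_option maxSynthPendingDepth 3

variable {r s r' s' : ℕ} (ks : Fin s → ℕ) (ks' : Fin s' → ℕ)

set_option maxHeartbeats 4000000 in
set_option synthInstance.maxHeartbeats 1000000 in
lemma rankD_le
    (mOp : ℕ → SumModel r s →ₗ[ZMod 2] SumModel r s)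
    (hmOp : ∀ i x, mOp i x =
      (0, fun j => if i + 1 = ks j then ((0 : ZMod 2), (x.2 j).1) else 0))
    (nOp : ℕ → SumModel r' s' →ₗ[ZMod 2] SumModel r' s')
    (hnOp : ∀ i x, nOp i x =
      (0, fun j => if i + 1 = ks' j then ((0 : ZMod 2), (x.2 j).1) else 0))
    (n t : ℕ) (htn : t ≤ n)
    (hkt : ∀ j, t + 1 ≤ ks j) (hkt' : ∀ j, t + 1 ≤ ks' j)
    (D : (Fin n → TensorProduct (ZMod 2) (SumModel r s) (SumModel r' s')) →ₗ[ZMod 2]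
        (Fin n → TensorProduct (ZMod 2) (SumModel r s) (SumModel r' s')))
    (hD : ∀ (b : Fin n → TensorProduct (ZMod 2) (SumModel r s) (SumModel r' s'))
        (j : Fin n),
      D b j = ∑ i : Fin n, if (j : ℕ) ≤ (i : ℕ) then
        TensorProduct.map (mOp ((i : ℕ) - (j : ℕ))) LinearMap.id (b i)
          + TensorProduct.map LinearMap.id (nOp ((i : ℕ) - (j : ℕ))) (b i) else 0) :
    Module.finrank (ZMod 2) (LinearMap.range D) ≤
      (n - t) * (r * s' + s * r' + s * s') + (n - t) * (s * s') := by
  classical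
  -- the elementary operators
  set S : ℕ → TT r s r' s' →ₗ[ZMod 2] TT r s r' s' :=
    fun p => TensorProduct.map (mOp p) LinearMap.id
      + TensorProduct.map LinearMap.id (nOp p) with hS
  have hD' : ∀ (b : CC r s r' s' n) (j : Fin n),
      D b j = ∑ i : Fin n, if (j : ℕ) ≤ (i : ℕ) then S ((i : ℕ) - (j : ℕ)) (b i) else 0 := by
    intro b j
    rw [hD]
    exact Finset.sum_congr rfl fun i _ => by split <;> simp [hS]
  -- small operators vanish
  have hm0 : ∀ p, p < t → mOp p = 0 := fun p hp =>
    mOp_small ks mOp hmOp p (fun j => by have := hkt j; omega)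
  have hn0 : ∀ p, p < t → nOp p = 0 := fun p hp =>
    mOp_small ks' nOp hnOp p (fun j => by have := hkt' j; omega)
  have hS0 : ∀ p, p < t → S p = 0 := by
    intro p hp
    rw [hS]
    simp only [hm0 p hp, hn0 p hp, TensorProduct.map_zero_left, TensorProduct.map_zero_right,
      add_zero]
  -- projections
  set Pt : SumModel r s →ₗ[ZMod 2] SumModel r s := inT r s ∘ₗ prT r s with hPt
  set Pc : SumModel r s →ₗ[ZMod 2] SumModel r s := inC r s ∘ₗ prC r s with hPc
  set Pe : SumModel r s →ₗ[ZMod 2] SumModel r s := inE r s ∘ₗ prE r s with hPe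
  set Pt' : SumModel r' s' →ₗ[ZMod 2] SumModel r' s' := inT r' s' ∘ₗ prT r' s' with hPt'
  set Pc' : SumModel r' s' →ₗ[ZMod 2] SumModel r' s' := inC r' s' ∘ₗ prC r' s' with hPc'
  set Pe' : SumModel r' s' →ₗ[ZMod 2] SumModel r' s' := inE r' s' ∘ₗ prE r' s' with hPe'
  set Qq : TT r s r' s' →ₗ[ZMod 2] TT r s r' s' := TensorProduct.map Pt Pc' + TensorProduct.map Pc Pt'
      + TensorProduct.map Pc Pc' with hQq
  set Pm : TT r s r' s' →ₗ[ZMod 2] TT r s r' s' := TensorProduct.map Pt Pe' + TensorProduct.map Pc Pe'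
      + TensorProduct.map Pe Pt' + TensorProduct.map Pe Pc' with hPm
  set Ptt : TT r s r' s' →ₗ[ZMod 2] TT r s r' s' := TensorProduct.map Pt Pt' with hPtt
  set Pee : TT r s r' s' →ₗ[ZMod 2] TT r s r' s' := TensorProduct.map Pe Pe' with hPee
  have hdecomp : Ptt + Qq + Pm + Pee = LinearMap.id := by
    rw [hPtt, hQq, hPm, hPee, ← TensorProduct.map_id]
    rw [← Psum r s, ← Psum r' s', ← hPt, ← hPc, ← hPe, ← hPt', ← hPc', ← hPe']
    simp only [TensorProduct.map_add_left, TensorProduct.map_add_right]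
    abel
  -- composition facts
  have hmPt : ∀ p, mOp p ∘ₗ Pt = 0 := fun p => by
    rw [hPt, ← LinearMap.comp_assoc, mOp_inT ks mOp hmOp p, LinearMap.zero_comp]
  have hmPe : ∀ p, mOp p ∘ₗ Pe = 0 := fun p => by
    rw [hPe, ← LinearMap.comp_assoc, mOp_inE ks mOp hmOp p, LinearMap.zero_comp]
  have hnPt' : ∀ p, nOp p ∘ₗ Pt' = 0 := fun p => by
    rw [hPt', ← LinearMap.comp_assoc, mOp_inT ks' nOp hnOp p, LinearMap.zero_comp]
  have hnPe' : ∀ p, nOp p ∘ₗ Pe' = 0 := fun p => by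
    rw [hPe', ← LinearMap.comp_assoc, mOp_inE ks' nOp hnOp p, LinearMap.zero_comp]
  have hPem : ∀ p, Pe ∘ₗ (mOp p ∘ₗ Pc) = mOp p ∘ₗ Pc := fun p => by
    rw [← LinearMap.comp_assoc, hPe, inE_prE_mOp ks mOp hmOp p]
  have hPe'n : ∀ p, Pe' ∘ₗ (nOp p ∘ₗ Pc') = nOp p ∘ₗ Pc' := fun p => by
    rw [← LinearMap.comp_assoc, hPe', inE_prE_mOp ks' nOp hnOp p]
  have hPePe : Pe ∘ₗ Pe = Pe := by
    apply LinearMap.ext; intro x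
    simp [hPe]
  have hPe'Pe' : Pe' ∘ₗ Pe' = Pe' := by
    apply LinearMap.ext; intro x
    simp [hPe']
  -- tensor-level facts
  have hSPtt : ∀ p, S p ∘ₗ Ptt = 0 := fun p => by
    rw [hS, hPtt, LinearMap.add_comp, ← TensorProduct.map_comp, ← TensorProduct.map_comp,
      hmPt p, hnPt' p, TensorProduct.map_zero_left, TensorProduct.map_zero_right, add_zero]
  have hSPee : ∀ p, S p ∘ₗ Pee = 0 := fun p => by
    rw [hS, hPee, LinearMap.add_comp, ← TensorProduct.map_comp, ← TensorProduct.map_comp,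
      hmPe p, hnPe' p, TensorProduct.map_zero_left, TensorProduct.map_zero_right, add_zero]
  have hSPm : ∀ p, S p ∘ₗ Pm = TensorProduct.map (mOp p ∘ₗ Pc) Pe'
      + TensorProduct.map Pe (nOp p ∘ₗ Pc') := fun p => by
    rw [hS, hPm]
    simp only [LinearMap.add_comp, LinearMap.comp_add, ← TensorProduct.map_comp,
      hmPt p, hmPe p, hnPt' p, hnPe' p, LinearMap.id_comp, LinearMap.comp_id,
      TensorProduct.map_zero_left, TensorProduct.map_zero_right, add_zero, zero_add]
  have hPeeS : ∀ p, Pee ∘ₗ (S p ∘ₗ Pm) = S p ∘ₗ Pm := fun p => by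
    rw [hSPm p, hPee, LinearMap.comp_add, ← TensorProduct.map_comp, ← TensorProduct.map_comp,
      hPe'Pe', hPePe, hPem p, hPe'n p]
  -- componentwise application on the complex
  set CL : (TT r s r' s' →ₗ[ZMod 2] TT r s r' s') →
      (CC r s r' s' n →ₗ[ZMod 2] CC r s r' s' n) :=
    fun f => LinearMap.pi (fun i => f ∘ₗ LinearMap.proj i) with hCL
  have hCL_apply : ∀ f (b : CC r s r' s' n) i, CL f b i = f (b i) := by
    intro f b i
    simp [hCL]
  have hCLadd : ∀ f g, CL (f + g) = CL f + CL g := by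
    intro f g
    apply LinearMap.ext; intro b
    funext i
    simp [hCL_apply]
  have hCLid : CL LinearMap.id = LinearMap.id := by
    apply LinearMap.ext; intro b
    funext i
    simp [hCL_apply]
  have hDPtt : D ∘ₗ CL Ptt = 0 := by
    apply LinearMap.ext; intro b
    funext j
    show D (CL Ptt b) j = 0
    rw [hD']
    apply Finset.sum_eq_zero
    intro i _
    split
    · rw [hCL_apply, ← LinearMap.comp_apply, hSPtt, LinearMap.zero_apply]
    · rfl
  have hDPee : D ∘ₗ CL Pee = 0 := by
    apply LinearMap.ext; intro b
    funext j
    show D (CL Pee b) j = 0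
    rw [hD']
    apply Finset.sum_eq_zero
    intro i _
    split
    · rw [hCL_apply, ← LinearMap.comp_apply, hSPee, LinearMap.zero_apply]
    · rfl
  have hDsplit : D = D ∘ₗ CL Qq + D ∘ₗ CL Pm := by
    calc D = D ∘ₗ CL LinearMap.id := by rw [hCLid, LinearMap.comp_id]
    _ = D ∘ₗ (CL Ptt + CL Qq + CL Pm + CL Pee) := by
        rw [← hCLadd, ← hCLadd, ← hCLadd, hdecomp]
    _ = D ∘ₗ CL Qq + D ∘ₗ CL Pm := by
        rw [LinearMap.comp_add, LinearMap.comp_add, LinearMap.comp_add, hDPtt, hDPee,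
          zero_add, add_zero]
  -- Q-side factorization
  set embq : Fin (n - t) → Fin n := fun j => ⟨(j : ℕ) + t, by have := j.isLt; omega⟩ with hembq
  have hembq_inj : Function.Injective embq := by
    intro a b h
    have : (a : ℕ) + t = (b : ℕ) + t := congrArg Fin.val h
    exact Fin.ext (by omega)
  set Θq : CC r s r' s' n →ₗ[ZMod 2] (Fin (n - t) →
      (TensorProduct (ZMod 2) (Fin r → ZMod 2) (Fin s' → ZMod 2)) ×
      ((TensorProduct (ZMod 2) (Fin s → ZMod 2) (Fin r' → ZMod 2)) ×
       (TensorProduct (ZMod 2) (Fin s → ZMod 2) (Fin s' → ZMod 2)))) :=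
    LinearMap.pi (fun j =>
      LinearMap.prod ((TensorProduct.map (prT r s) (prC r' s')) ∘ₗ LinearMap.proj (embq j))
        (LinearMap.prod
          ((TensorProduct.map (prC r s) (prT r' s')) ∘ₗ LinearMap.proj (embq j))
          ((TensorProduct.map (prC r s) (prC r' s')) ∘ₗ LinearMap.proj (embq j)))) with hΘq
  set Gq : ((TensorProduct (ZMod 2) (Fin r → ZMod 2) (Fin s' → ZMod 2)) ×
      ((TensorProduct (ZMod 2) (Fin s → ZMod 2) (Fin r' → ZMod 2)) ×
       (TensorProduct (ZMod 2) (Fin s → ZMod 2) (Fin s' → ZMod 2)))) →ₗ[ZMod 2]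
      TT r s r' s' :=
    (TensorProduct.map (inT r s) (inC r' s')) ∘ₗ LinearMap.fst _ _ _
      + (TensorProduct.map (inC r s) (inT r' s')) ∘ₗ (LinearMap.fst _ _ _ ∘ₗ LinearMap.snd _ _ _)
      + (TensorProduct.map (inC r s) (inC r' s')) ∘ₗ (LinearMap.snd _ _ _ ∘ₗ LinearMap.snd _ _ _)
    with hGq
  set ιq := ∑ j : Fin (n - t),
      LinearMap.single (ZMod 2) (fun _ : Fin n => TT r s r' s') (embq j) ∘ₗ Gq ∘ₗ
        LinearMap.proj j with hιq
  have hιq_apply : ∀ (x) (i : Fin n), ιq x i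
      = (∑ j : Fin (n - t),
          Pi.single (M := fun _ : Fin n => TT r s r' s') (embq j) (Gq (x j))) i := by
    intro x i
    rw [hιq, LinearMap.sum_apply, Finset.sum_apply, Finset.sum_apply]
    apply Finset.sum_congr rfl
    intro j _
    rfl
  have hιΘ : ∀ (b : CC r s r' s' n) (i : Fin n), t ≤ (i : ℕ) → ιq (Θq b) i = Qq (b i) := by
    intro b i hi
    have hlt : (i : ℕ) - t < n - t := by have := i.isLt; omega
    have he : embq ⟨(i : ℕ) - t, hlt⟩ = i := Fin.ext (by simp [hembq]; omega)
    rw [hιq_apply, ← he, sum_single_eval_eq embq hembq_inj]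
    rw [he]
    simp only [hΘq, hGq, hQq, LinearMap.pi_apply, LinearMap.prod_apply, Pi.prod, Function.prod_apply,
      LinearMap.comp_apply, LinearMap.proj_apply, LinearMap.add_apply, LinearMap.fst_apply,
      LinearMap.snd_apply]
    rw [← LinearMap.comp_apply, ← LinearMap.comp_apply, ← LinearMap.comp_apply,
      ← TensorProduct.map_comp, ← TensorProduct.map_comp, ← TensorProduct.map_comp,
      ← hPt, ← hPc, ← hPt', ← hPc']
    rw [he]
  have hιΘ0 : ∀ (b : CC r s r' s' n) (i : Fin n), (i : ℕ) < t → ιq (Θq b) i = 0 := by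
    intro b i hi
    rw [hιq_apply]
    apply sum_single_eval_ne
    intro j
    apply Fin.ne_of_val_ne
    simp only [hembq]
    omega
  have hDQ : D ∘ₗ CL Qq = (D ∘ₗ ιq) ∘ₗ Θq := by
    apply LinearMap.ext; intro b
    funext j
    show D (CL Qq b) j = D (ιq (Θq b)) j
    rw [hD', hD']
    apply Finset.sum_congr rfl
    intro i _
    split
    · rename_i hji
      by_cases hti : t ≤ (i : ℕ)
      · rw [hCL_apply, hιΘ b i hti]
      · rw [hS0 ((i : ℕ) - (j : ℕ)) (by omega), LinearMap.zero_apply, LinearMap.zero_apply]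
    · rfl
  -- Pm-side factorization
  set embm : Fin (n - t) → Fin n := fun j => ⟨(j : ℕ), by have := j.isLt; omega⟩ with hembm
  have hembm_inj : Function.Injective embm := by
    intro a b h
    apply Fin.ext
    have h2 : (embm a).val = (embm b).val := congrArg Fin.val h
    simpa [hembm] using h2
  set Ψ := ∑ j : Fin (n - t),
      LinearMap.single (ZMod 2) (fun _ : Fin n => TT r s r' s') (embm j) ∘ₗ
        (TensorProduct.map (inE r s) (inE r' s')) ∘ₗ LinearMap.proj j with hΨ
  set Ξ : CC r s r' s' n →ₗ[ZMod 2]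
      (Fin (n - t) → TensorProduct (ZMod 2) (Fin s → ZMod 2) (Fin s' → ZMod 2)) :=
    LinearMap.pi (fun j => (TensorProduct.map (prE r s) (prE r' s')) ∘ₗ
      LinearMap.proj (embm j) ∘ₗ (D ∘ₗ CL Pm)) with hΞ
  have hΨ_apply : ∀ (x) (i : Fin n), Ψ x i
      = (∑ j : Fin (n - t),
          Pi.single (M := fun _ : Fin n => TT r s r' s') (embm j)
            (TensorProduct.map (inE r s) (inE r' s') (x j))) i := by
    intro x i
    rw [hΨ, LinearMap.sum_apply, Finset.sum_apply, Finset.sum_apply]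
    apply Finset.sum_congr rfl
    intro j _
    rfl
  have hDPm_top : ∀ (b : CC r s r' s' n) (i : Fin n), n - t ≤ (i : ℕ) →
      (D ∘ₗ CL Pm) b i = 0 := by
    intro b i hi
    rw [LinearMap.comp_apply, hD']
    apply Finset.sum_eq_zero
    intro k _
    split
    · rw [hS0 ((k : ℕ) - (i : ℕ)) (by have := k.isLt; omega), LinearMap.zero_apply]
    · rfl
  have hPee_DPm : ∀ (b : CC r s r' s' n) (i : Fin n),
      Pee ((D ∘ₗ CL Pm) b i) = (D ∘ₗ CL Pm) b i := by
    intro b i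
    rw [LinearMap.comp_apply, hD', map_sum]
    apply Finset.sum_congr rfl
    intro k _
    rw [apply_ite (fun z => Pee z)]
    split
    · rw [hCL_apply]
      exact LinearMap.congr_fun (hPeeS ((k : ℕ) - (i : ℕ))) (b k)
    · exact map_zero Pee
  have hΨΞ : D ∘ₗ CL Pm = Ψ ∘ₗ Ξ := by
    apply LinearMap.ext; intro b
    funext i
    show (D ∘ₗ CL Pm) b i = Ψ (Ξ b) i
    by_cases hi : (i : ℕ) < n - t
    · have he : embm ⟨(i : ℕ), hi⟩ = i := Fin.ext rfl
      rw [hΨ_apply, ← he, sum_single_eval_eq embm hembm_inj]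
      have hΞb : Ξ b ⟨(i : ℕ), hi⟩ =
          TensorProduct.map (prE r s) (prE r' s') ((D ∘ₗ CL Pm) b (embm ⟨(i : ℕ), hi⟩)) := by
        simp [hΞ]
      rw [hΞb, he, ← LinearMap.comp_apply, ← TensorProduct.map_comp, ← hPe, ← hPe', ← hPee,
        hPee_DPm]
    · rw [hΨ_apply]
      rw [sum_single_eval_ne _ _ _ (fun j => Fin.ne_of_val_ne (by have := j.isLt; simp [hembm]; omega))]
      exact hDPm_top b i (by omega)
  -- rank bounds
  haveI i1 : Module.Finite (ZMod 2)
      (TensorProduct (ZMod 2) (Fin r → ZMod 2) (Fin s' → ZMod 2)) :=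
    Module.Finite.tensorProduct _ _ _
  haveI i2 : Module.Finite (ZMod 2)
      (TensorProduct (ZMod 2) (Fin s → ZMod 2) (Fin r' → ZMod 2)) :=
    Module.Finite.tensorProduct _ _ _
  haveI i3 : Module.Finite (ZMod 2)
      (TensorProduct (ZMod 2) (Fin s → ZMod 2) (Fin s' → ZMod 2)) :=
    Module.Finite.tensorProduct _ _ _
  haveI i4 : Module.Finite (ZMod 2) (TT r s r' s') :=
    Module.Finite.tensorProduct _ _ _
  have hfinQ : Module.finrank (ZMod 2) (LinearMap.range (D ∘ₗ CL Qq)) ≤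
      (n - t) * (r * s' + s * r' + s * s') := by
    rw [hDQ]
    refine le_trans (Submodule.finrank_mono (LinearMap.range_comp_le_range Θq (D ∘ₗ ιq))) ?_
    refine le_trans (LinearMap.finrank_range_le (D ∘ₗ ιq)) ?_
    rw [Module.finrank_pi_fintype (ZMod 2)]
    simp only [Module.finrank_prod, Module.finrank_tensorProduct, Module.finrank_pi,
      Finset.sum_const, Finset.card_univ, Fintype.card_fin, smul_eq_mul]
    exact le_of_eq (by ring)
  have hfinM : Module.finrank (ZMod 2) (LinearMap.range (D ∘ₗ CL Pm)) ≤
      (n - t) * (s * s') := by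
    rw [hΨΞ]
    refine le_trans (Submodule.finrank_mono (LinearMap.range_comp_le_range Ξ Ψ)) ?_
    refine le_trans (LinearMap.finrank_range_le Ψ) ?_
    rw [Module.finrank_pi_fintype (ZMod 2)]
    simp [Module.finrank_tensorProduct, Module.finrank_pi,
      Finset.sum_const, Finset.card_univ, Fintype.card_fin, smul_eq_mul]
  have hsub : LinearMap.range D ≤
      LinearMap.range (D ∘ₗ CL Qq) ⊔ LinearMap.range (D ∘ₗ CL Pm) := by
    rintro x ⟨b, rfl⟩
    have hb : D b = (D ∘ₗ CL Qq) b + (D ∘ₗ CL Pm) b := by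
      rw [← LinearMap.add_apply, ← hDsplit]
    rw [hb]
    exact Submodule.add_mem_sup (LinearMap.mem_range_self _ b) (LinearMap.mem_range_self _ b)
  refine le_trans (Submodule.finrank_mono hsub) ?_
  refine le_trans (Submodule.finrank_add_le_finrank_add_finrank _ _) ?_
  exact Nat.add_le_add hfinQ hfinM

set_option maxHeartbeats 1600000 in
set_option synthInstance.maxHeartbeats 400000 in
lemma DD_eq_zero
    (mOp : ℕ → SumModel r s →ₗ[ZMod 2] SumModel r s)
    (hmOp : ∀ i x, mOp i x =
      (0, fun j => if i + 1 = ks j then ((0 : ZMod 2), (x.2 j).1) else 0))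
    (nOp : ℕ → SumModel r' s' →ₗ[ZMod 2] SumModel r' s')
    (hnOp : ∀ i x, nOp i x =
      (0, fun j => if i + 1 = ks' j then ((0 : ZMod 2), (x.2 j).1) else 0))
    (n : ℕ)
    (D : (Fin n → TensorProduct (ZMod 2) (SumModel r s) (SumModel r' s')) →ₗ[ZMod 2]
        (Fin n → TensorProduct (ZMod 2) (SumModel r s) (SumModel r' s')))
    (hD : ∀ (b : Fin n → TensorProduct (ZMod 2) (SumModel r s) (SumModel r' s'))
        (j : Fin n),
      D b j = ∑ i : Fin n, if (j : ℕ) ≤ (i : ℕ) then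
        TensorProduct.map (mOp ((i : ℕ) - (j : ℕ))) LinearMap.id (b i)
          + TensorProduct.map LinearMap.id (nOp ((i : ℕ) - (j : ℕ))) (b i) else 0) :
    ∀ b, D (D b) = 0 := by
  classical
  set S : ℕ → TT r s r' s' →ₗ[ZMod 2] TT r s r' s' :=
    fun p => TensorProduct.map (mOp p) LinearMap.id
      + TensorProduct.map LinearMap.id (nOp p) with hS
  have hD' : ∀ (b : CC r s r' s' n) (j : Fin n),
      D b j = ∑ i : Fin n, if (j : ℕ) ≤ (i : ℕ) then S ((i : ℕ) - (j : ℕ)) (b i) else 0 := by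
    intro b j
    rw [hD]
    exact Finset.sum_congr rfl fun i _ => by split <;> simp [hS]
  have char2 : ∀ (x : TT r s r' s'), x + x = 0 := by
    intro x
    have h2 : x + x = (2 : ZMod 2) • x := (two_smul _ x).symm
    rw [h2, show (2 : ZMod 2) = 0 by decide, zero_smul]
  have hSS : ∀ a c, S a ∘ₗ S c = TensorProduct.map (mOp a) (nOp c)
      + TensorProduct.map (mOp c) (nOp a) := by
    intro a c
    rw [hS]
    simp only [LinearMap.add_comp, LinearMap.comp_add, ← TensorProduct.map_comp,
      mOp_mOp ks mOp hmOp a c, mOp_mOp ks' nOp hnOp a c, LinearMap.id_comp, LinearMap.comp_id,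
      TensorProduct.map_zero_left, TensorProduct.map_zero_right, zero_add, add_zero]
    exact add_comm _ _
  intro b
  funext j
  rw [Pi.zero_apply, hD']
  have step1 : ∀ i : Fin n, (if (j : ℕ) ≤ (i : ℕ) then S ((i : ℕ) - (j : ℕ)) (D b i) else 0)
      = ∑ k : Fin n, (if (j : ℕ) ≤ (i : ℕ) ∧ (i : ℕ) ≤ (k : ℕ) then
          S ((i : ℕ) - (j : ℕ)) (S ((k : ℕ) - (i : ℕ)) (b k)) else 0) := by
    intro i
    by_cases h : (j : ℕ) ≤ (i : ℕ)
    · rw [if_pos h, hD' b i, map_sum]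
      apply Finset.sum_congr rfl
      intro k _
      rw [apply_ite (fun z => S ((i : ℕ) - (j : ℕ)) z), map_zero]
      by_cases hik : (i : ℕ) ≤ (k : ℕ)
      · rw [if_pos hik, if_pos ⟨h, hik⟩]
      · rw [if_neg hik, if_neg (by tauto)]
    · rw [if_neg h]
      symm
      apply Finset.sum_eq_zero
      intro k _
      rw [if_neg (by tauto)]
  rw [Finset.sum_congr rfl (fun i _ => step1 i), Finset.sum_comm]
  apply Finset.sum_eq_zero
  intro k _
  set F : Fin n → TT r s r' s' := fun i =>
    if (j : ℕ) ≤ (i : ℕ) ∧ (i : ℕ) ≤ (k : ℕ) then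
      TensorProduct.map (mOp ((i : ℕ) - (j : ℕ))) (nOp ((k : ℕ) - (i : ℕ))) (b k) else 0 with hF
  set G : Fin n → TT r s r' s' := fun i =>
    if (j : ℕ) ≤ (i : ℕ) ∧ (i : ℕ) ≤ (k : ℕ) then
      TensorProduct.map (mOp ((k : ℕ) - (i : ℕ))) (nOp ((i : ℕ) - (j : ℕ))) (b k) else 0 with hG
  have horig : ∀ i : Fin n, (if (j : ℕ) ≤ (i : ℕ) ∧ (i : ℕ) ≤ (k : ℕ) then
      S ((i : ℕ) - (j : ℕ)) (S ((k : ℕ) - (i : ℕ)) (b k)) else 0) = F i + G i := by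
    intro i
    by_cases h : (j : ℕ) ≤ (i : ℕ) ∧ (i : ℕ) ≤ (k : ℕ)
    · rw [if_pos h, hF, hG]
      simp only [if_pos h]
      rw [← LinearMap.comp_apply, hSS, LinearMap.add_apply]
    · rw [if_neg h, hF, hG]
      simp only [if_neg h, add_zero]
  set φ : Fin n → Fin n := fun i =>
    if h : (j : ℕ) ≤ (i : ℕ) ∧ (i : ℕ) ≤ (k : ℕ) then
      ⟨(j : ℕ) + (k : ℕ) - (i : ℕ), by have := k.isLt; omega⟩ else i with hφ
  have hφφ : Function.Involutive φ := by
    intro i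
    by_cases h : (j : ℕ) ≤ (i : ℕ) ∧ (i : ℕ) ≤ (k : ℕ)
    · have hφi : φ i = ⟨(j : ℕ) + (k : ℕ) - (i : ℕ), by have := k.isLt; omega⟩ := dif_pos h
      have hc : (j : ℕ) ≤ ((j : ℕ) + (k : ℕ) - (i : ℕ)) ∧
          ((j : ℕ) + (k : ℕ) - (i : ℕ)) ≤ (k : ℕ) := ⟨by omega, by omega⟩
      have hφ2 : φ ⟨(j : ℕ) + (k : ℕ) - (i : ℕ), by have := k.isLt; omega⟩ =
          ⟨(j : ℕ) + (k : ℕ) - ((j : ℕ) + (k : ℕ) - (i : ℕ)), by have := k.isLt; omega⟩ :=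
        dif_pos hc
      rw [hφi, hφ2]
      exact Fin.ext (by simp only [Fin.val_mk]; omega)
    · have hφi : φ i = i := dif_neg h
      rw [hφi, hφi]
  have hGF : ∀ i, G i = F (φ i) := by
    intro i
    by_cases h : (j : ℕ) ≤ (i : ℕ) ∧ (i : ℕ) ≤ (k : ℕ)
    · have hφi : φ i = ⟨(j : ℕ) + (k : ℕ) - (i : ℕ), by have := k.isLt; omega⟩ := dif_pos h
      rw [hG, hF, hφi]
      simp only [if_pos h, Fin.val_mk]
      rw [if_pos (⟨by omega, by omega⟩ : (j : ℕ) ≤ (j : ℕ) + (k : ℕ) - (i : ℕ) ∧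
        (j : ℕ) + (k : ℕ) - (i : ℕ) ≤ (k : ℕ))]
      have e1 : (j : ℕ) + (k : ℕ) - (i : ℕ) - (j : ℕ) = (k : ℕ) - (i : ℕ) := by omega
      have e2 : (k : ℕ) - ((j : ℕ) + (k : ℕ) - (i : ℕ)) = (i : ℕ) - (j : ℕ) := by omega
      rw [e1, e2]
    · have hφi : φ i = i := dif_neg h
      rw [hG, hF, hφi]
      simp only [if_neg h]
  have hsumGF : ∑ i : Fin n, G i = ∑ i : Fin n, F i := by
    rw [show (fun i => G i) = fun i => F (φ i) from funext hGF]
    exact Fintype.sum_bijective φ hφφ.bijective _ _ (fun i => rfl)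
  rw [Finset.sum_congr rfl (fun i _ => horig i), Finset.sum_add_distrib, hsumGF]
  exact char2 _

end RankBound

set_option maxHeartbeats 1600000 in
set_option synthInstance.maxHeartbeats 400000 in
set_option maxSynthPendingDepth 3 in
/-- Let `M` be a finite direct sum of copies of the trivial module and of
right modules `R_k` with `k ≥ 2`, and `N` a finite direct sum of copies of the trivial module
and of left modules `L_k` with `k ≥ 2` (over `A = ℤ/2[ε]/(ε²)`, encoded by their operator
sequences).  Then for every `n ≥ 1` the cohomology of the truncated reduced bar complex
`(M ⊗_A N)_n` has dimension at least `dim M · dim N`; if all parameters `k` are at least `3`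
and `n ≥ 2`, it has dimension at least `2 · dim M · dim N`. -/
theorem stmt8 (r s : ℕ) (ks : Fin s → ℕ) (hks : ∀ j, 2 ≤ ks j)
    (r' s' : ℕ) (ks' : Fin s' → ℕ) (hks' : ∀ j, 2 ≤ ks' j)
    (mOp : ℕ → SumModel r s →ₗ[ZMod 2] SumModel r s)
    (hmOp : ∀ i x, mOp i x =
      (0, fun j => if i + 1 = ks j then ((0 : ZMod 2), (x.2 j).1) else 0))
    (nOp : ℕ → SumModel r' s' →ₗ[ZMod 2] SumModel r' s')
    (hnOp : ∀ i x, nOp i x =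
      (0, fun j => if i + 1 = ks' j then ((0 : ZMod 2), (x.2 j).1) else 0))
    (n : ℕ) (hn : 1 ≤ n)
    (D : (Fin n → TensorProduct (ZMod 2) (SumModel r s) (SumModel r' s')) →ₗ[ZMod 2]
        (Fin n → TensorProduct (ZMod 2) (SumModel r s) (SumModel r' s')))
    (hD : ∀ (b : Fin n → TensorProduct (ZMod 2) (SumModel r s) (SumModel r' s'))
        (j : Fin n),
      D b j = ∑ i : Fin n, if (j : ℕ) ≤ (i : ℕ) then
        TensorProduct.map (mOp ((i : ℕ) - (j : ℕ))) LinearMap.id (b i)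
          + TensorProduct.map LinearMap.id (nOp ((i : ℕ) - (j : ℕ))) (b i) else 0) :
    Module.finrank (ZMod 2) (SumModel r s) * Module.finrank (ZMod 2) (SumModel r' s') ≤
      Module.finrank (ZMod 2)
        (LinearMap.ker D ⧸ (LinearMap.range D).comap (LinearMap.ker D).subtype) ∧
    ((∀ j, 3 ≤ ks j) → (∀ j, 3 ≤ ks' j) → 2 ≤ n →
      2 * (Module.finrank (ZMod 2) (SumModel r s) *
          Module.finrank (ZMod 2) (SumModel r' s')) ≤
        Module.finrank (ZMod 2)
          (LinearMap.ker D ⧸ (LinearMap.range D).comap (LinearMap.ker D).subtype)) := by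
  classical
  haveI i4 : Module.Finite (ZMod 2) (TT r s r' s') :=
    Module.Finite.tensorProduct _ _ _
  -- dimensions
  have hdV : Module.finrank (ZMod 2) (SumModel r s) = r + 2 * s := by
    rw [Module.finrank_prod, Module.finrank_pi, Module.finrank_pi_fintype]
    simp [Module.finrank_prod, Module.finrank_self, Finset.sum_const, Finset.card_univ,
      Fintype.card_fin, smul_eq_mul]
    ring
  have hdW : Module.finrank (ZMod 2) (SumModel r' s') = r' + 2 * s' := by
    rw [Module.finrank_prod, Module.finrank_pi, Module.finrank_pi_fintype]
    simp [Module.finrank_prod, Module.finrank_self, Finset.sum_const, Finset.card_univ,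
      Fintype.card_fin, smul_eq_mul]
    ring
  have hCrk : Module.finrank (ZMod 2) (CC r s r' s' n) = n * ((r + 2 * s) * (r' + 2 * s')) := by
    rw [Module.finrank_pi_fintype]
    simp [Module.finrank_tensorProduct, hdV, hdW, Finset.sum_const, Finset.card_univ,
      Fintype.card_fin, smul_eq_mul]
  -- D ∘ D = 0
  have hDD := DD_eq_zero ks ks' mOp hmOp nOp hnOp n D hD
  have hrk : LinearMap.range D ≤ LinearMap.ker D := by
    rintro x ⟨b, rfl⟩
    exact LinearMap.mem_ker.2 (hDD b)
  -- dimension bookkeeping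
  have e1 : Module.finrank (ZMod 2)
        (LinearMap.ker D ⧸ (LinearMap.range D).comap (LinearMap.ker D).subtype)
      + Module.finrank (ZMod 2) ((LinearMap.range D).comap (LinearMap.ker D).subtype)
      = Module.finrank (ZMod 2) (LinearMap.ker D) :=
    Submodule.finrank_quotient_add_finrank _
  have e2 : Module.finrank (ZMod 2) ((LinearMap.range D).comap (LinearMap.ker D).subtype)
      = Module.finrank (ZMod 2) (LinearMap.range D) :=
    (Submodule.comapSubtypeEquivOfLe hrk).finrank_eq
  have e3 : Module.finrank (ZMod 2) (LinearMap.range D)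
      + Module.finrank (ZMod 2) (LinearMap.ker D)
      = Module.finrank (ZMod 2) (CC r s r' s' n) :=
    LinearMap.finrank_range_add_finrank_ker D
  set A := Module.finrank (ZMod 2)
    (LinearMap.ker D ⧸ (LinearMap.range D).comap (LinearMap.ker D).subtype) with hA
  set R := Module.finrank (ZMod 2) (LinearMap.range D) with hR
  have hAR : A + 2 * R = n * ((r + 2 * s) * (r' + 2 * s')) := by
    rw [← hCrk, ← e3, ← e1, e2]
    ring
  set K : ℕ := r * s' + s * r' + s * s' + s * s' with hK
  have h2K : 2 * K ≤ (r + 2 * s) * (r' + 2 * s') := by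
    have : (r + 2 * s) * (r' + 2 * s') = r * r' + 2 * K := by rw [hK]; ring
    omega
  constructor
  · -- part 1
    have hb1 : R ≤ (n - 1) * (r * s' + s * r' + s * s') + (n - 1) * (s * s') :=
      rankD_le ks ks' mOp hmOp nOp hnOp n 1 hn
        (fun j => by have := hks j; omega) (fun j => by have := hks' j; omega) D hD
    have hb1' : R ≤ (n - 1) * K := by
      rw [hK]
      calc R ≤ (n - 1) * (r * s' + s * r' + s * s') + (n - 1) * (s * s') := hb1
      _ = (n - 1) * (r * s' + s * r' + s * s' + s * s') := by ring
    rw [hdV, hdW]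
    obtain ⟨m, rfl⟩ : ∃ m, n = m + 1 := ⟨n - 1, by omega⟩
    have hmn : m + 1 - 1 = m := by omega
    rw [hmn] at hb1'
    have hmul : m * (2 * K) ≤ m * ((r + 2 * s) * (r' + 2 * s')) :=
      Nat.mul_le_mul_left m h2K
    have hexp : (m + 1) * ((r + 2 * s) * (r' + 2 * s'))
        = m * ((r + 2 * s) * (r' + 2 * s')) + (r + 2 * s) * (r' + 2 * s') := by ring
    have hqk : m * (2 * K) = 2 * (m * K) := by ring
    omega
  · -- part 2
    intro h3 h3' hn2
    have hb2 : R ≤ (n - 2) * (r * s' + s * r' + s * s') + (n - 2) * (s * s') :=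
      rankD_le ks ks' mOp hmOp nOp hnOp n 2 hn2
        (fun j => by have := h3 j; omega) (fun j => by have := h3' j; omega) D hD
    have hb2' : R ≤ (n - 2) * K := by
      rw [hK]
      calc R ≤ (n - 2) * (r * s' + s * r' + s * s') + (n - 2) * (s * s') := hb2
      _ = (n - 2) * (r * s' + s * r' + s * s' + s * s') := by ring
    rw [hdV, hdW]
    obtain ⟨m, rfl⟩ : ∃ m, n = m + 2 := ⟨n - 2, by omega⟩
    have hmn : m + 2 - 2 = m := by omega
    rw [hmn] at hb2'
    have hmul : m * (2 * K) ≤ m * ((r + 2 * s) * (r' + 2 * s')) :=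
      Nat.mul_le_mul_left m h2K
    have hexp : (m + 2) * ((r + 2 * s) * (r' + 2 * s'))
        = m * ((r + 2 * s) * (r' + 2 * s')) + 2 * ((r + 2 * s) * (r' + 2 * s')) := by ring
    have hqk : m * (2 * K) = 2 * (m * K) := by ring
    omega
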